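/- Let r₁, r₂ > 0. Then, as ε → 0⁺, the ratio (λ₁(ε) − C̃₂₂(ε)) / C̃₂₁(ε) converges to 1, and the ratio (λ₂(ε) − C̃₂₂(ε)) / C̃₂₁(ε) converges to −r₂³/r₁³. -/

import Mathlib

open Real Filter Topology

/-- Half-distance between the fixed points of the composed reflections. -/
noncomputable def alphaBi (r₁ r₂ ε : ℝ) : ℝ :=
  Real.sqrt (ε * (2 * r₁ + ε) * (2 * r₂ + ε) * (2 * r₁ + 2 * r₂ + ε)) /
    (2 * (r₁ + r₂ + ε))

/-- Bispherical coordinate of the boundary of the first sphere. -/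
noncomputable def xi1 (r₁ r₂ ε : ℝ) : ℝ := Real.arsinh (alphaBi r₁ r₂ ε / r₁)

/-- Bispherical coordinate of the boundary of the second sphere. -/
noncomputable def xi2 (r₁ r₂ ε : ℝ) : ℝ := Real.arsinh (alphaBi r₁ r₂ ε / r₂)

/-- Capacitance coefficient C₁₁. -/
noncomputable def C11 (r₁ r₂ ε : ℝ) : ℝ :=
  8 * π * alphaBi r₁ r₂ ε *
    ∑' n : ℕ, Real.exp ((2 * n + 1) * xi2 r₁ r₂ ε) /
      (Real.exp ((2 * n + 1) * (xi1 r₁ r₂ ε + xi2 r₁ r₂ ε)) - 1)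

/-- Capacitance coefficient C₂₂. -/
noncomputable def C22 (r₁ r₂ ε : ℝ) : ℝ :=
  8 * π * alphaBi r₁ r₂ ε *
    ∑' n : ℕ, Real.exp ((2 * n + 1) * xi1 r₁ r₂ ε) /
      (Real.exp ((2 * n + 1) * (xi1 r₁ r₂ ε + xi2 r₁ r₂ ε)) - 1)

/-- Capacitance coefficient C₁₂. -/
noncomputable def C12 (r₁ r₂ ε : ℝ) : ℝ :=
  -(8 * π * alphaBi r₁ r₂ ε *
    ∑' n : ℕ, 1 / (Real.exp ((2 * n + 1) * (xi1 r₁ r₂ ε + xi2 r₁ r₂ ε)) - 1))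

/-- Capacitance coefficient C₂₁. -/
noncomputable def C21 (r₁ r₂ ε : ℝ) : ℝ := C12 r₁ r₂ ε

/-- Rescaled capacitance coefficient C̃₁₁ = (3/(4π r₁³)) C₁₁. -/
noncomputable def Ct11 (r₁ r₂ ε : ℝ) : ℝ := 3 / (4 * π * r₁ ^ 3) * C11 r₁ r₂ ε

/-- Rescaled capacitance coefficient C̃₂₂ = (3/(4π r₂³)) C₂₂. -/
noncomputable def Ct22 (r₁ r₂ ε : ℝ) : ℝ := 3 / (4 * π * r₂ ^ 3) * C22 r₁ r₂ ε

/-- Rescaled capacitance coefficient C̃₁₂ = (3/(4π r₁³)) C₁₂. -/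
noncomputable def Ct12 (r₁ r₂ ε : ℝ) : ℝ := 3 / (4 * π * r₁ ^ 3) * C12 r₁ r₂ ε

/-- Rescaled capacitance coefficient C̃₂₁ = (3/(4π r₂³)) C₂₁. -/
noncomputable def Ct21 (r₁ r₂ ε : ℝ) : ℝ := 3 / (4 * π * r₂ ^ 3) * C21 r₁ r₂ ε

/-- Smaller eigenvalue of the rescaled capacitance matrix. -/
noncomputable def lam1 (r₁ r₂ ε : ℝ) : ℝ :=
  1 / 2 * (Ct11 r₁ r₂ ε + Ct22 r₁ r₂ ε -
    Real.sqrt ((Ct11 r₁ r₂ ε - Ct22 r₁ r₂ ε) ^ 2 + 4 * Ct12 r₁ r₂ ε * Ct21 r₁ r₂ ε))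

/-- Larger eigenvalue of the rescaled capacitance matrix. -/
noncomputable def lam2 (r₁ r₂ ε : ℝ) : ℝ :=
  1 / 2 * (Ct11 r₁ r₂ ε + Ct22 r₁ r₂ ε +
    Real.sqrt ((Ct11 r₁ r₂ ε - Ct22 r₁ r₂ ε) ^ 2 + 4 * Ct12 r₁ r₂ ε * Ct21 r₁ r₂ ε))


noncomputable def sfun (a b : ℝ) (n : ℕ) : ℝ :=
  Real.exp ((2 * n + 1) * a) / (Real.exp ((2 * n + 1) * b) - 1)

lemma evfc_exp_gt (b : ℝ) (hb : 0 < b) (n : ℕ) : 1 < Real.exp ((2 * n + 1) * b) := by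
  rw [Real.one_lt_exp_iff]
  positivity

lemma sfun_pos (a b : ℝ) (hb : 0 < b) (n : ℕ) : 0 < sfun a b n :=
  div_pos (Real.exp_pos _) (by linarith [evfc_exp_gt b hb n])

lemma evfc_summable_exp (c : ℝ) (hc : 0 < c) :
    Summable (fun n : ℕ => Real.exp (-((2 * n + 1) * c))) := by
  have h : ∀ n : ℕ, Real.exp (-((2 * n + 1) * c)) = Real.exp (-c) * Real.exp (-(2*c)) ^ n := by
    intro n
    rw [← Real.exp_nat_mul, ← Real.exp_add]
    ring_nf
  simp only [h]
  exact (summable_geometric_of_lt_one (Real.exp_nonneg _)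
    (Real.exp_lt_one_iff.2 (by linarith))).mul_left _

lemma evfc_tsum_exp_le (c : ℝ) (hc : 0 < c) (hc2 : c ≤ 1/2) :
    ∑' n : ℕ, Real.exp (-((2 * n + 1) * c)) ≤ 1 / c := by
  have h : ∀ n : ℕ, Real.exp (-((2 * n + 1) * c)) = Real.exp (-c) * Real.exp (-(2*c)) ^ n := by
    intro n
    rw [← Real.exp_nat_mul, ← Real.exp_add]
    ring_nf
  have hlt : Real.exp (-(2*c)) < 1 := Real.exp_lt_one_iff.2 (by linarith)
  have key : c ≤ 1 - Real.exp (-(2*c)) := by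
    have h1 : Real.exp (-(2*c)) * (1 + 2*c) ≤ 1 := by
      have hA : 1 + 2*c ≤ Real.exp (2*c) := by linarith [Real.add_one_le_exp (2*c)]
      calc Real.exp (-(2*c)) * (1 + 2*c) ≤ Real.exp (-(2*c)) * Real.exp (2*c) := by
            gcongr
        _ = 1 := by rw [← Real.exp_add]; simp
    nlinarith [Real.exp_pos (-(2*c))]
  calc ∑' n : ℕ, Real.exp (-((2 * n + 1) * c))
      = Real.exp (-c) * (1 - Real.exp (-(2*c)))⁻¹ := by
        simp only [h]; rw [tsum_mul_left, tsum_geometric_of_lt_one (Real.exp_nonneg _) hlt]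
    _ ≤ 1 * (1 - Real.exp (-(2*c)))⁻¹ := by
        gcongr
        · exact Real.exp_le_one_iff.2 (by linarith)
    _ ≤ 1 / c := by
        rw [one_mul, one_div]
        exact inv_anti₀ hc key

lemma sfun_le_exp (a b : ℝ) (ha : 0 ≤ a) (hab : a < b) (n : ℕ) :
    sfun a b n ≤ (1 - Real.exp (-b))⁻¹ * Real.exp (-((2 * n + 1) * (b - a))) := by
  have hb : 0 < b := lt_of_le_of_lt ha hab
  have ht : (0:ℝ) < 2 * n + 1 := by positivity
  have hd : 0 < Real.exp ((2 * n + 1) * b) - 1 := by linarith [evfc_exp_gt b hb n]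
  have hu : 0 < 1 - Real.exp (-b) := by
    have := Real.exp_lt_one_iff.2 (show -b < 0 by linarith); linarith
  rw [sfun, div_le_iff₀ hd]
  have e1 : Real.exp (-((2 * n + 1) * (b - a))) * Real.exp ((2 * n + 1) * b)
      = Real.exp ((2 * n + 1) * a) := by rw [← Real.exp_add]; congr 1; ring
  have e2 : Real.exp ((2 * n + 1) * a) * Real.exp (-((2 * n + 1) * b))
      = Real.exp (-((2 * n + 1) * (b - a))) := by rw [← Real.exp_add]; congr 1; ring
  have h3 : Real.exp (-((2 * n + 1) * (b - a))) * (Real.exp ((2 * n + 1) * b) - 1)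
      = Real.exp ((2 * n + 1) * a) * (1 - Real.exp (-((2 * n + 1) * b))) := by
    linear_combination e1 + e2
  have h1 : 1 - Real.exp (-b) ≤ 1 - Real.exp (-((2 * n + 1) * b)) := by
    have : Real.exp (-((2 * n + 1) * b)) ≤ Real.exp (-b) := by
      apply Real.exp_le_exp.2; nlinarith
    linarith
  have h4 : 1 ≤ (1 - Real.exp (-b))⁻¹ * (1 - Real.exp (-((2 * n + 1) * b))) := by
    have hm := mul_le_mul_of_nonneg_left h1 (inv_nonneg.2 hu.le)
    rwa [inv_mul_cancel₀ hu.ne'] at hm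
  calc Real.exp ((2 * n + 1) * a)
      = Real.exp ((2 * n + 1) * a) * 1 := (mul_one _).symm
    _ ≤ Real.exp ((2 * n + 1) * a) *
          ((1 - Real.exp (-b))⁻¹ * (1 - Real.exp (-((2 * n + 1) * b)))) := by
        gcongr
    _ = (1 - Real.exp (-b))⁻¹ *
          (Real.exp (-((2 * n + 1) * (b - a))) * (Real.exp ((2 * n + 1) * b) - 1)) := by
        rw [h3]; ring
    _ = (1 - Real.exp (-b))⁻¹ * Real.exp (-((2 * n + 1) * (b - a))) *
          (Real.exp ((2 * n + 1) * b) - 1) := by ring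

lemma sfun_summable (a b : ℝ) (ha : 0 ≤ a) (hab : a < b) : Summable (sfun a b) := by
  have hb : 0 < b := lt_of_le_of_lt ha hab
  exact Summable.of_nonneg_of_le (fun n => (sfun_pos a b hb n).le)
    (sfun_le_exp a b ha hab)
    ((evfc_summable_exp (b - a) (by linarith)).mul_left _)

lemma sfun_mono (a a' b : ℝ) (hb : 0 < b) (h : a ≤ a') (n : ℕ) : sfun a b n ≤ sfun a' b n := by
  have hd : 0 < Real.exp ((2 * n + 1) * b) - 1 := by linarith [evfc_exp_gt b hb n]
  have hnum : Real.exp ((2 * n + 1) * a) ≤ Real.exp ((2 * n + 1) * a') := by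
    apply Real.exp_le_exp.2; nlinarith
  simp only [sfun]
  gcongr

lemma tsum_sfun_pos (b : ℝ) (hb : 0 < b) : 0 < ∑' n, sfun 0 b n :=
  Summable.tsum_pos (sfun_summable 0 b le_rfl hb) (fun n => (sfun_pos 0 b hb n).le) 0 (sfun_pos 0 b hb 0)


lemma evfc_diff_le (a b : ℝ) (ha : 0 < a) (hab : a < b) (hb2 : b ≤ 1/2) :
    (∑' n, sfun a b n) - (∑' n, sfun 0 b n) ≤ 1/(2*b) + 1 + 2/(b - a) := by
  have hb : 0 < b := lt_trans ha hab
  have hc : 0 < b - a := by linarith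
  have hc2 : b - a ≤ 1/2 := by linarith
  set N : ℕ := ⌈1/(2*b)⌉₊ with hN
  have hNge : 1/(2*b) ≤ (N:ℝ) := Nat.le_ceil _
  have hNle : (N:ℝ) ≤ 1/(2*b) + 1 := by
    have := Nat.ceil_lt_add_one (show (0:ℝ) ≤ 1/(2*b) by positivity)
    linarith
  set g : ℕ → ℝ := fun n => sfun a b n - sfun 0 b n with hg
  have hsa := sfun_summable a b ha.le hab
  have hs0 := sfun_summable 0 b le_rfl hb
  have hgsum : Summable g := hsa.sub hs0
  have htsum : (∑' n, sfun a b n) - (∑' n, sfun 0 b n) = ∑' n, g n :=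
    (Summable.tsum_sub hsa hs0).symm
  rw [htsum]
  rw [← Summable.sum_add_tsum_nat_add N hgsum]
  have hgnonneg : ∀ n, 0 ≤ g n := fun n =>
    sub_nonneg.2 (sfun_mono 0 a b hb ha.le n)
  -- head bound
  have hhead : ∑ i ∈ Finset.range N, g i ≤ 1/(2*b) + 1 := by
    have hone : ∀ i, g i ≤ 1 := by
      intro i
      have hd : 0 < Real.exp ((2 * i + 1) * b) - 1 := by linarith [evfc_exp_gt b hb i]
      have : g i = (Real.exp ((2 * i + 1) * a) - 1) / (Real.exp ((2 * i + 1) * b) - 1) := by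
        simp [hg, sfun, sub_div]
      rw [this, div_le_one hd]
      have : Real.exp ((2 * i + 1) * a) ≤ Real.exp ((2 * i + 1) * b) := by
        apply Real.exp_le_exp.2; nlinarith [show (0:ℝ) < 2 * i + 1 by positivity]
      linarith
    calc ∑ i ∈ Finset.range N, g i ≤ ∑ i ∈ Finset.range N, (1:ℝ) :=
          Finset.sum_le_sum (fun i _ => hone i)
      _ = N := by simp
      _ ≤ 1/(2*b) + 1 := hNle
  -- tail bound
  have htail : ∑' n, g (n + N) ≤ 2/(b - a) := by
    have hbd : ∀ n : ℕ, g (n + N) ≤ 2 * Real.exp (-((2 * n + 1) * (b - a))) := by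
      intro n
      have ht1 : (1:ℝ) ≤ (2 * ((n:ℝ) + N) + 1) * b := by
        have h2N : 1 ≤ 2 * (N:ℝ) * b := by
          rw [div_le_iff₀ (by positivity)] at hNge
          linarith [hNge]
        nlinarith [hb.le, (Nat.cast_nonneg n : (0:ℝ) ≤ (n:ℝ))]
      have hcast : ((n + N : ℕ) : ℝ) = (n:ℝ) + N := by push_cast; ring
      have hd : 0 < Real.exp ((2 * ((n:ℝ) + N) + 1) * b) - 1 := by
        have := evfc_exp_gt b hb (n + N); rw [hcast] at this; linarith
      have h2exp : (2:ℝ) ≤ Real.exp ((2 * ((n:ℝ) + N) + 1) * b) := by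
        have := Real.add_one_le_exp (1:ℝ)
        have hmono : Real.exp (1:ℝ) ≤ Real.exp ((2 * ((n:ℝ) + N) + 1) * b) :=
          Real.exp_le_exp.2 ht1
        linarith
      have e1 : Real.exp (-((2 * ((n:ℝ) + N) + 1) * (b - a))) *
            Real.exp ((2 * ((n:ℝ) + N) + 1) * b)
          = Real.exp ((2 * ((n:ℝ) + N) + 1) * a) := by rw [← Real.exp_add]; congr 1; ring
      have hsfle : sfun a b (n + N) ≤ 2 * Real.exp (-((2 * ((n:ℝ) + N) + 1) * (b - a))) := by
        rw [sfun, hcast, div_le_iff₀ hd]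
        nlinarith [e1, h2exp, Real.exp_pos (-((2 * ((n:ℝ) + N) + 1) * (b - a)))]
      have hexpmono : Real.exp (-((2 * ((n:ℝ) + N) + 1) * (b - a))) ≤
          Real.exp (-((2 * (n:ℝ) + 1) * (b - a))) := by
        apply Real.exp_le_exp.2
        have : (0:ℝ) ≤ (N:ℝ) := Nat.cast_nonneg N
        nlinarith
      have hkey : g (n + N) ≤ sfun a b (n + N) := by
        have := (sfun_pos 0 b hb (n + N)).le
        simp only [hg]; linarith
      linarith
    have hsum1 : Summable (fun n => g (n + N)) := (summable_nat_add_iff N).2 hgsum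
    have hsum2 : Summable (fun n : ℕ => 2 * Real.exp (-((2 * n + 1) * (b - a)))) :=
      (evfc_summable_exp (b - a) hc).mul_left 2
    calc ∑' n, g (n + N) ≤ ∑' n : ℕ, 2 * Real.exp (-((2 * n + 1) * (b - a))) :=
          Summable.tsum_le_tsum hbd hsum1 hsum2
      _ = 2 * ∑' n : ℕ, Real.exp (-((2 * n + 1) * (b - a))) := tsum_mul_left
      _ ≤ 2 * (1 / (b - a)) := by
          have := evfc_tsum_exp_le (b - a) hc hc2
          linarith
      _ = 2 / (b - a) := by ring
  linarith

lemma evfc_lower (b : ℝ) (hb : 0 < b) (K : ℕ) (hK : (2 * K + 1) * b ≤ 1) :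
    (∑ i ∈ Finset.range K, (1:ℝ)/(2 * i + 1)) / (Real.exp 1 * b) ≤ ∑' n, sfun 0 b n := by
  have hterm : ∀ i ∈ Finset.range K, (1:ℝ)/(2 * i + 1) / (Real.exp 1 * b) ≤ sfun 0 b i := by
    intro i hi
    have hiK : i < K := Finset.mem_range.1 hi
    have ht : (0:ℝ) < 2 * i + 1 := by positivity
    have htb : (2 * (i:ℝ) + 1) * b ≤ 1 := by
      have : (i:ℝ) ≤ K - 1 := by
        have : (i:ℝ) + 1 ≤ K := by exact_mod_cast hiK
        linarith
      nlinarith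
    have hd : 0 < Real.exp ((2 * i + 1) * b) - 1 := by linarith [evfc_exp_gt b hb i]
    have hub : Real.exp ((2 * i + 1) * b) - 1 ≤ Real.exp 1 * ((2 * i + 1) * b) := by
      -- e^x - 1 ≤ x e^x ≤ x e for x ≤ 1
      have hx : (0:ℝ) < (2 * i + 1) * b := by positivity
      have h1 : Real.exp ((2 * i + 1) * b) - 1 ≤ (2 * i + 1) * b * Real.exp ((2 * i + 1) * b) := by
        have := Real.add_one_le_exp (-((2 * i + 1) * b))
        have he := Real.exp_pos ((2 * i + 1) * b)
        have hid : Real.exp (-((2 * i + 1) * b)) * Real.exp ((2 * i + 1) * b) = 1 := by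
          rw [← Real.exp_add]; simp
        nlinarith
      have h2 : Real.exp ((2 * i + 1) * b) ≤ Real.exp 1 := Real.exp_le_exp.2 htb
      nlinarith
    rw [sfun]
    rw [mul_zero, Real.exp_zero]
    rw [div_div, div_le_div_iff₀ (by positivity) hd]
    calc (1:ℝ) * (Real.exp ((2 * i + 1) * b) - 1) = Real.exp ((2 * i + 1) * b) - 1 := one_mul _
      _ ≤ Real.exp 1 * ((2 * i + 1) * b) := hub
      _ = (2 * i + 1) * (Real.exp 1 * b) := by ring
      _ = 1 * ((2 * i + 1) * (Real.exp 1 * b)) := by ring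
  calc (∑ i ∈ Finset.range K, (1:ℝ)/(2 * i + 1)) / (Real.exp 1 * b)
      = ∑ i ∈ Finset.range K, (1:ℝ)/(2 * i + 1) / (Real.exp 1 * b) := by
        rw [Finset.sum_div]
    _ ≤ ∑ i ∈ Finset.range K, sfun 0 b i := Finset.sum_le_sum hterm
    _ ≤ ∑' n, sfun 0 b n := Summable.sum_le_tsum _ (fun i _ => (sfun_pos 0 b hb i).le)
        (sfun_summable 0 b le_rfl hb)

lemma evfc_harmonic : Tendsto (fun K => ∑ i ∈ Finset.range K, (1:ℝ)/(2 * i + 1)) atTop atTop := by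
  have hmono : ∀ K, (1/2) * ∑ i ∈ Finset.range K, (1:ℝ)/(i + 1)
      ≤ ∑ i ∈ Finset.range K, (1:ℝ)/(2 * i + 1) := by
    intro K
    rw [Finset.mul_sum]
    apply Finset.sum_le_sum
    intro i _
    have hhalf : (1:ℝ)/2 * (1/((i:ℝ)+1)) = 1/(2*((i:ℝ)+1)) := by
      rw [div_mul_div_comm, one_mul]
    rw [hhalf, div_le_div_iff₀ (by positivity) (by positivity)]
    nlinarith [show (0:ℝ) ≤ (i:ℝ) from Nat.cast_nonneg i]
  refine tendsto_atTop_mono hmono ?_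
  exact (tendsto_const_mul_atTop_of_pos (by norm_num : (0:ℝ) < 1/2)).2
    Real.tendsto_sum_range_one_div_nat_succ_atTop

lemma evfc_arsinh_le (x : ℝ) (hx : 0 ≤ x) : Real.arsinh x ≤ x := by
  rcases hx.eq_or_lt with h | h
  · simp [← h]
  · rw [← Real.sinh_le_sinh, Real.sinh_arsinh]
    exact (Real.self_lt_sinh_iff.2 h).le

lemma evfc_le_arsinh (x : ℝ) (hx : 0 ≤ x) (hx1 : x ≤ 1) : x / 2 ≤ Real.arsinh x := by
  have h1 : (1:ℝ) ≤ Real.sqrt (1 + x ^ 2) := by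
    nlinarith [Real.sq_sqrt (show (0:ℝ) ≤ 1 + x ^ 2 by positivity),
      Real.sqrt_nonneg (1 + x ^ 2), sq_nonneg x]
  have h2 : Real.log (1 + x) ≤ Real.arsinh x := by
    rw [Real.arsinh]
    exact Real.log_le_log (by linarith) (by linarith)
  have h3 : x / 2 ≤ Real.log (1 + x) := by
    rw [Real.le_log_iff_exp_le (by linarith)]
    have ha := Real.add_one_le_exp (-(x/2))
    have hb : Real.exp (x/2) * Real.exp (-(x/2)) = 1 := by rw [← Real.exp_add]; simp
    nlinarith [Real.exp_pos (x/2), Real.exp_pos (-(x/2)), sq_nonneg x]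
  linarith

lemma evfc_alpha_pos (r₁ r₂ ε : ℝ) (hr₁ : 0 < r₁) (hr₂ : 0 < r₂) (hε : 0 < ε) :
    0 < alphaBi r₁ r₂ ε := by
  apply div_pos
  · apply Real.sqrt_pos.2
    have h1 : 0 < 2 * r₁ + ε := by linarith
    have h2 : 0 < 2 * r₂ + ε := by linarith
    have h3 : 0 < 2 * r₁ + 2 * r₂ + ε := by linarith
    positivity
  · linarith

lemma evfc_alpha_tendsto (r₁ r₂ : ℝ) (hr₁ : 0 < r₁) (hr₂ : 0 < r₂) :
    Tendsto (alphaBi r₁ r₂) (𝓝[>] 0) (𝓝 0) := by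
  have hc : ContinuousAt (alphaBi r₁ r₂) 0 := by
    apply ContinuousAt.div
    · exact (Real.continuous_sqrt.continuousAt).comp (by fun_prop)
    · fun_prop
    · simp; intro h; linarith
  have h0 : alphaBi r₁ r₂ 0 = 0 := by simp [alphaBi]
  have := hc.tendsto
  rw [h0] at this
  exact this.mono_left nhdsWithin_le_nhds
noncomputable def Bfun (r₁ r₂ ε : ℝ) : ℝ := xi1 r₁ r₂ ε + xi2 r₁ r₂ ε
noncomputable def T0f (r₁ r₂ ε : ℝ) : ℝ := ∑' n, sfun 0 (Bfun r₁ r₂ ε) n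
noncomputable def T1f (r₁ r₂ ε : ℝ) : ℝ := ∑' n, sfun (xi2 r₁ r₂ ε) (Bfun r₁ r₂ ε) n
noncomputable def T2f (r₁ r₂ ε : ℝ) : ℝ := ∑' n, sfun (xi1 r₁ r₂ ε) (Bfun r₁ r₂ ε) n
noncomputable def ufun (r₁ r₂ ε : ℝ) : ℝ :=
  (Ct11 r₁ r₂ ε - Ct22 r₁ r₂ ε) / Ct21 r₁ r₂ ε

lemma C11_eq (r₁ r₂ ε : ℝ) : C11 r₁ r₂ ε = 8 * π * alphaBi r₁ r₂ ε * T1f r₁ r₂ ε := rfl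

lemma C22_eq (r₁ r₂ ε : ℝ) : C22 r₁ r₂ ε = 8 * π * alphaBi r₁ r₂ ε * T2f r₁ r₂ ε := rfl

lemma C12_eq (r₁ r₂ ε : ℝ) : C12 r₁ r₂ ε = -(8 * π * alphaBi r₁ r₂ ε * T0f r₁ r₂ ε) := by
  unfold C12 T0f Bfun
  congr 2
  exact tsum_congr fun n => by rw [sfun, mul_zero, Real.exp_zero]

section facts
variable (r₁ r₂ : ℝ)

lemma evfc_facts (hr₁ : 0 < r₁) (hr₂ : 0 < r₂) :
    ∀ᶠ ε in 𝓝[>] (0:ℝ),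
      0 < xi1 r₁ r₂ ε ∧ 0 < xi2 r₁ r₂ ε ∧ 0 < Bfun r₁ r₂ ε ∧ Bfun r₁ r₂ ε ≤ 1/2 ∧
      Bfun r₁ r₂ ε ≤ (1 + 2*r₁/r₂) * xi1 r₁ r₂ ε ∧
      Bfun r₁ r₂ ε ≤ (1 + 2*r₂/r₁) * xi2 r₁ r₂ ε ∧
      Bfun r₁ r₂ ε ≤ alphaBi r₁ r₂ ε * (1/r₁ + 1/r₂) ∧
      0 < T0f r₁ r₂ ε ∧ 0 < alphaBi r₁ r₂ ε := by
  have hδ : (0:ℝ) < min (min r₁ r₂) (r₁ * r₂ / (2 * (r₁ + r₂))) := by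
    apply lt_min (lt_min hr₁ hr₂)
    positivity
  filter_upwards [self_mem_nhdsWithin,
    (evfc_alpha_tendsto r₁ r₂ hr₁ hr₂).eventually_lt_const hδ] with ε hε hAδ
  have hA : 0 < alphaBi r₁ r₂ ε := evfc_alpha_pos r₁ r₂ ε hr₁ hr₂ hε
  set A := alphaBi r₁ r₂ ε with hAdef
  have hAr₁ : A ≤ r₁ := le_trans hAδ.le (le_trans (min_le_left _ _) (min_le_left _ _))
  have hAr₂ : A ≤ r₂ := le_trans hAδ.le (le_trans (min_le_left _ _) (min_le_right _ _))
  have hAc : A ≤ r₁ * r₂ / (2 * (r₁ + r₂)) := le_trans hAδ.le (min_le_right _ _)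
  have hd₁ : A / r₁ ≤ 1 := by rw [div_le_one hr₁]; exact hAr₁
  have hd₂ : A / r₂ ≤ 1 := by rw [div_le_one hr₂]; exact hAr₂
  have hx1pos : 0 < xi1 r₁ r₂ ε := Real.arsinh_pos_iff.2 (div_pos hA hr₁)
  have hx2pos : 0 < xi2 r₁ r₂ ε := Real.arsinh_pos_iff.2 (div_pos hA hr₂)
  have hx1le : xi1 r₁ r₂ ε ≤ A / r₁ := evfc_arsinh_le _ (by positivity)
  have hx2le : xi2 r₁ r₂ ε ≤ A / r₂ := evfc_arsinh_le _ (by positivity)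
  have hx1ge : A / r₁ / 2 ≤ xi1 r₁ r₂ ε := evfc_le_arsinh _ (by positivity) hd₁
  have hx2ge : A / r₂ / 2 ≤ xi2 r₁ r₂ ε := evfc_le_arsinh _ (by positivity) hd₂
  have hBpos : 0 < Bfun r₁ r₂ ε := by rw [Bfun]; linarith
  have hBle : Bfun r₁ r₂ ε ≤ A * (1/r₁ + 1/r₂) := by
    rw [Bfun]
    have e1 : A / r₁ = A * (1/r₁) := by ring
    have e2 : A / r₂ = A * (1/r₂) := by ring
    nlinarith [hx1le, hx2le]
  have hBhalf : Bfun r₁ r₂ ε ≤ 1/2 := by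
    refine le_trans hBle ?_
    rw [le_div_iff₀ (by positivity)] at hAc
    have h1 : 0 < r₁ * r₂ := by positivity
    rw [← sub_nonneg]
    have key : 1/2 - A * (1/r₁ + 1/r₂) = (r₁ * r₂ - A * (2 * (r₁ + r₂))) / (2 * (r₁ * r₂)) := by
      field_simp
      ring
    rw [key]
    apply div_nonneg _ (by positivity)
    linarith
  have hC1 : Bfun r₁ r₂ ε ≤ (1 + 2*r₁/r₂) * xi1 r₁ r₂ ε := by
    rw [Bfun]
    have h1 : xi2 r₁ r₂ ε ≤ (2*r₁/r₂) * xi1 r₁ r₂ ε := by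
      have e1 : A / r₂ = (r₁/r₂) * (A/r₁) := by field_simp
      have h2 : A / r₁ ≤ 2 * xi1 r₁ r₂ ε := by linarith
      calc xi2 r₁ r₂ ε ≤ A / r₂ := hx2le
        _ = (r₁/r₂) * (A/r₁) := e1
        _ ≤ (r₁/r₂) * (2 * xi1 r₁ r₂ ε) := by
            apply mul_le_mul_of_nonneg_left h2 (by positivity)
        _ = (2*r₁/r₂) * xi1 r₁ r₂ ε := by ring
    nlinarith [hx1pos]
  have hC2 : Bfun r₁ r₂ ε ≤ (1 + 2*r₂/r₁) * xi2 r₁ r₂ ε := by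
    rw [Bfun]
    have h1 : xi1 r₁ r₂ ε ≤ (2*r₂/r₁) * xi2 r₁ r₂ ε := by
      have e1 : A / r₁ = (r₂/r₁) * (A/r₂) := by field_simp
      have h2 : A / r₂ ≤ 2 * xi2 r₁ r₂ ε := by linarith
      calc xi1 r₁ r₂ ε ≤ A / r₁ := hx1le
        _ = (r₂/r₁) * (A/r₂) := e1
        _ ≤ (r₂/r₁) * (2 * xi2 r₁ r₂ ε) := by
            apply mul_le_mul_of_nonneg_left h2 (by positivity)
        _ = (2*r₂/r₁) * xi2 r₁ r₂ ε := by ring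
    nlinarith [hx2pos]
  exact ⟨hx1pos, hx2pos, hBpos, hBhalf, hC1, hC2, hBle,
    tsum_sfun_pos _ hBpos, hA⟩

lemma evfc_B_tendsto (hr₁ : 0 < r₁) (hr₂ : 0 < r₂) :
    Tendsto (Bfun r₁ r₂) (𝓝[>] 0) (𝓝 0) := by
  apply squeeze_zero'
  · filter_upwards [evfc_facts r₁ r₂ hr₁ hr₂] with ε hf
    exact hf.2.2.1.le
  · filter_upwards [evfc_facts r₁ r₂ hr₁ hr₂] with ε hf
    exact hf.2.2.2.2.2.2.1
  · have := (evfc_alpha_tendsto r₁ r₂ hr₁ hr₂).mul_const (1/r₁ + 1/r₂)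
    simpa using this

lemma evfc_BT_tendsto (hr₁ : 0 < r₁) (hr₂ : 0 < r₂) :
    Tendsto (fun ε => Bfun r₁ r₂ ε * T0f r₁ r₂ ε) (𝓝[>] 0) atTop := by
  rw [tendsto_atTop]
  intro M
  obtain ⟨K, hK⟩ := (evfc_harmonic.eventually_ge_atTop (Real.exp 1 * M)).exists
  have hKpos : (0:ℝ) < 1/(2*K+1) := by positivity
  filter_upwards [evfc_facts r₁ r₂ hr₁ hr₂,
    (evfc_B_tendsto r₁ r₂ hr₁ hr₂).eventually_lt_const hKpos] with ε hf hBsmall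
  obtain ⟨_, _, hBpos, _, _, _, _, _, _⟩ := hf
  have hK2 : (2*K+1) * Bfun r₁ r₂ ε ≤ 1 := by
    rw [lt_div_iff₀ (by positivity)] at hBsmall
    nlinarith
  have hlow := evfc_lower (Bfun r₁ r₂ ε) hBpos K hK2
  have he1 : (0:ℝ) < Real.exp 1 := Real.exp_pos 1
  have heq : (∑ i ∈ Finset.range K, (1:ℝ)/(2*i+1)) / (Real.exp 1 * Bfun r₁ r₂ ε) *
      Bfun r₁ r₂ ε = (∑ i ∈ Finset.range K, (1:ℝ)/(2*i+1)) / Real.exp 1 := by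
    field_simp
  have h2 := mul_le_mul_of_nonneg_right hlow hBpos.le
  rw [heq] at h2
  have h3 : M ≤ (∑ i ∈ Finset.range K, (1:ℝ)/(2*i+1)) / Real.exp 1 := by
    rw [le_div_iff₀ he1]
    nlinarith
  have hT0 : T0f r₁ r₂ ε = ∑' n, sfun 0 (Bfun r₁ r₂ ε) n := rfl
  rw [hT0]
  nlinarith

end facts
lemma evfc_ratio2 (r₁ r₂ : ℝ) (hr₁ : 0 < r₁) (hr₂ : 0 < r₂) :
    Tendsto (fun ε => (T2f r₁ r₂ ε - T0f r₁ r₂ ε) / T0f r₁ r₂ ε) (𝓝[>] 0) (𝓝 0) := by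
  set C : ℝ := 1 + 2*r₂/r₁ with hC
  have hCpos : 0 < C := by rw [hC]; positivity
  apply squeeze_zero' (g := fun ε => (1 + 2*C) * (Bfun r₁ r₂ ε * T0f r₁ r₂ ε)⁻¹)
  · filter_upwards [evfc_facts r₁ r₂ hr₁ hr₂] with ε hf
    obtain ⟨hx1, hx2, hB, hBh, hC1, hC2, hBle, hT0, hA⟩ := hf
    apply div_nonneg _ hT0.le
    rw [sub_nonneg, T2f, T0f]
    exact Summable.tsum_le_tsum (sfun_mono 0 _ _ hB hx1.le)
      (sfun_summable 0 _ le_rfl hB)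
      (sfun_summable _ _ hx1.le (by rw [Bfun]; linarith))
  · filter_upwards [evfc_facts r₁ r₂ hr₁ hr₂] with ε hf
    obtain ⟨hx1, hx2, hB, hBh, hC1, hC2, hBle, hT0, hA⟩ := hf
    have hx1B : xi1 r₁ r₂ ε < Bfun r₁ r₂ ε := by rw [Bfun]; linarith
    have hdiff : T2f r₁ r₂ ε - T0f r₁ r₂ ε ≤
        1/(2 * Bfun r₁ r₂ ε) + 1 + 2/(Bfun r₁ r₂ ε - xi1 r₁ r₂ ε) := by
      exact evfc_diff_le _ _ hx1 hx1B hBh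
    have hsub : Bfun r₁ r₂ ε - xi1 r₁ r₂ ε = xi2 r₁ r₂ ε := by rw [Bfun]; ring
    rw [hsub] at hdiff
    have hC2' : Bfun r₁ r₂ ε ≤ C * xi2 r₁ r₂ ε := by rw [hC]; exact hC2
    have hnum : 1/(2 * Bfun r₁ r₂ ε) + 1 + 2/(xi2 r₁ r₂ ε) ≤ (1 + 2*C) / Bfun r₁ r₂ ε := by
      rw [le_div_iff₀ hB]
      have e3 : (2/(xi2 r₁ r₂ ε)) * Bfun r₁ r₂ ε ≤ 2*C := by
        rw [div_mul_eq_mul_div, div_le_iff₀ hx2]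
        linarith
      calc (1/(2 * Bfun r₁ r₂ ε) + 1 + 2/(xi2 r₁ r₂ ε)) * Bfun r₁ r₂ ε
          = 1/2 + Bfun r₁ r₂ ε + (2/(xi2 r₁ r₂ ε)) * Bfun r₁ r₂ ε := by
            field_simp
        _ ≤ 1 + 2*C := by linarith
    calc (T2f r₁ r₂ ε - T0f r₁ r₂ ε) / T0f r₁ r₂ ε
        ≤ ((1 + 2*C) / Bfun r₁ r₂ ε) / T0f r₁ r₂ ε := by
          exact (div_le_div_iff_of_pos_right hT0).2 (le_trans hdiff hnum)
        _ = (1 + 2*C) * (Bfun r₁ r₂ ε * T0f r₁ r₂ ε)⁻¹ := by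
          rw [div_div, div_eq_mul_inv]
  · have h1 := (evfc_BT_tendsto r₁ r₂ hr₁ hr₂).inv_tendsto_atTop
    have h2 := h1.const_mul (1 + 2*C)
    simpa using h2
lemma evfc_ratio1 (r₁ r₂ : ℝ) (hr₁ : 0 < r₁) (hr₂ : 0 < r₂) :
    Tendsto (fun ε => (T1f r₁ r₂ ε - T0f r₁ r₂ ε) / T0f r₁ r₂ ε) (𝓝[>] 0) (𝓝 0) := by
  set C : ℝ := 1 + 2*r₁/r₂ with hC
  have hCpos : 0 < C := by rw [hC]; positivity
  apply squeeze_zero' (g := fun ε => (1 + 2*C) * (Bfun r₁ r₂ ε * T0f r₁ r₂ ε)⁻¹)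
  · filter_upwards [evfc_facts r₁ r₂ hr₁ hr₂] with ε hf
    obtain ⟨hx1, hx2, hB, hBh, hC1, hC2, hBle, hT0, hA⟩ := hf
    apply div_nonneg _ hT0.le
    rw [sub_nonneg, T1f, T0f]
    exact Summable.tsum_le_tsum (sfun_mono 0 _ _ hB hx2.le)
      (sfun_summable 0 _ le_rfl hB)
      (sfun_summable _ _ hx2.le (by rw [Bfun]; linarith))
  · filter_upwards [evfc_facts r₁ r₂ hr₁ hr₂] with ε hf
    obtain ⟨hx1, hx2, hB, hBh, hC1, hC2, hBle, hT0, hA⟩ := hf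
    have hx2B : xi2 r₁ r₂ ε < Bfun r₁ r₂ ε := by rw [Bfun]; linarith
    have hdiff : T1f r₁ r₂ ε - T0f r₁ r₂ ε ≤
        1/(2 * Bfun r₁ r₂ ε) + 1 + 2/(Bfun r₁ r₂ ε - xi2 r₁ r₂ ε) :=
      evfc_diff_le _ _ hx2 hx2B hBh
    have hsub : Bfun r₁ r₂ ε - xi2 r₁ r₂ ε = xi1 r₁ r₂ ε := by rw [Bfun]; ring
    rw [hsub] at hdiff
    have hC1' : Bfun r₁ r₂ ε ≤ C * xi1 r₁ r₂ ε := by rw [hC]; exact hC1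
    have hnum : 1/(2 * Bfun r₁ r₂ ε) + 1 + 2/(xi1 r₁ r₂ ε) ≤ (1 + 2*C) / Bfun r₁ r₂ ε := by
      rw [le_div_iff₀ hB]
      have e3 : (2/(xi1 r₁ r₂ ε)) * Bfun r₁ r₂ ε ≤ 2*C := by
        rw [div_mul_eq_mul_div, div_le_iff₀ hx1]
        linarith
      calc (1/(2 * Bfun r₁ r₂ ε) + 1 + 2/(xi1 r₁ r₂ ε)) * Bfun r₁ r₂ ε
          = 1/2 + Bfun r₁ r₂ ε + (2/(xi1 r₁ r₂ ε)) * Bfun r₁ r₂ ε := by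
            field_simp
        _ ≤ 1 + 2*C := by linarith
    calc (T1f r₁ r₂ ε - T0f r₁ r₂ ε) / T0f r₁ r₂ ε
        ≤ ((1 + 2*C) / Bfun r₁ r₂ ε) / T0f r₁ r₂ ε :=
          (div_le_div_iff_of_pos_right hT0).2 (le_trans hdiff hnum)
        _ = (1 + 2*C) * (Bfun r₁ r₂ ε * T0f r₁ r₂ ε)⁻¹ := by
          rw [div_div, div_eq_mul_inv]
  · have h1 := (evfc_BT_tendsto r₁ r₂ hr₁ hr₂).inv_tendsto_atTop
    have h2 := h1.const_mul (1 + 2*C)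
    simpa using h2

lemma evfc_u_tendsto (r₁ r₂ : ℝ) (hr₁ : 0 < r₁) (hr₂ : 0 < r₂) :
    Tendsto (ufun r₁ r₂) (𝓝[>] 0) (𝓝 (1 - r₂^3/r₁^3)) := by
  set q : ℝ := r₂^3/r₁^3 with hq
  have hmodel : Tendsto (fun ε => 1 - q + ((T2f r₁ r₂ ε - T0f r₁ r₂ ε) / T0f r₁ r₂ ε
      - q * ((T1f r₁ r₂ ε - T0f r₁ r₂ ε) / T0f r₁ r₂ ε))) (𝓝[>] 0) (𝓝 (1 - q)) := by
    have h := (tendsto_const_nhds (x := (1:ℝ) - q) (f := 𝓝[>] (0:ℝ))).add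
      ((evfc_ratio2 r₁ r₂ hr₁ hr₂).sub ((evfc_ratio1 r₁ r₂ hr₁ hr₂).const_mul q))
    simpa using h
  apply hmodel.congr'
  have hπ : (0:ℝ) < π := Real.pi_pos
  filter_upwards [evfc_facts r₁ r₂ hr₁ hr₂] with ε hf
  obtain ⟨hx1, hx2, hB, hBh, hC1, hC2, hBle, hT0, hA⟩ := hf
  rw [ufun, Ct11, Ct22, Ct21, C21, C11_eq, C22_eq, C12_eq]
  have hX : 0 < 3/(4*π*r₂^3) * (8*π*alphaBi r₁ r₂ ε * T0f r₁ r₂ ε) := by positivity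
  have hden : 3/(4*π*r₂^3) * (-(8*π*alphaBi r₁ r₂ ε * T0f r₁ r₂ ε)) ≠ 0 := by
    rw [mul_neg]; exact neg_ne_zero.2 hX.ne'
  rw [eq_div_iff hden, hq]
  field_simp
  ring

theorem eigenvector_first_component_limits (r₁ r₂ : ℝ) (hr₁ : 0 < r₁) (hr₂ : 0 < r₂) :
    Tendsto (fun ε => (lam1 r₁ r₂ ε - Ct22 r₁ r₂ ε) / Ct21 r₁ r₂ ε)
      (𝓝[>] (0 : ℝ)) (𝓝 1) ∧
    Tendsto (fun ε => (lam2 r₁ r₂ ε - Ct22 r₁ r₂ ε) / Ct21 r₁ r₂ ε)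
      (𝓝[>] (0 : ℝ)) (𝓝 (-(r₂ ^ 3 / r₁ ^ 3))) := by
  have hπ : (0:ℝ) < π := Real.pi_pos
  set q : ℝ := r₂^3/r₁^3 with hq
  have hq0 : 0 < q := by rw [hq]; positivity
  have hu := evfc_u_tendsto r₁ r₂ hr₁ hr₂
  rw [← hq] at hu
  have hev : ∀ᶠ ε in 𝓝[>] (0:ℝ),
      ((lam1 r₁ r₂ ε - Ct22 r₁ r₂ ε) / Ct21 r₁ r₂ ε
        = (ufun r₁ r₂ ε + Real.sqrt (ufun r₁ r₂ ε^2 + 4*q)) / 2) ∧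
      ((lam2 r₁ r₂ ε - Ct22 r₁ r₂ ε) / Ct21 r₁ r₂ ε
        = (ufun r₁ r₂ ε - Real.sqrt (ufun r₁ r₂ ε^2 + 4*q)) / 2) := by
    filter_upwards [evfc_facts r₁ r₂ hr₁ hr₂] with ε hf
    obtain ⟨hx1, hx2, hB, hBh, hC1, hC2, hBle, hT0, hA⟩ := hf
    have hc_neg : Ct21 r₁ r₂ ε < 0 := by
      rw [Ct21, C21, C12_eq]
      have hpos : 0 < 3/(4*π*r₂^3) * (8*π*alphaBi r₁ r₂ ε * T0f r₁ r₂ ε) := by positivity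
      rw [mul_neg]
      linarith
    have hcne : Ct21 r₁ r₂ ε ≠ 0 := hc_neg.ne
    have hbq : Ct12 r₁ r₂ ε = q * Ct21 r₁ r₂ ε := by
      rw [Ct12, Ct21, C21, hq]
      field_simp
    have huc : ufun r₁ r₂ ε * Ct21 r₁ r₂ ε = Ct11 r₁ r₂ ε - Ct22 r₁ r₂ ε := by
      rw [ufun]; exact div_mul_cancel₀ _ hcne
    have hsq : Real.sqrt ((Ct11 r₁ r₂ ε - Ct22 r₁ r₂ ε)^2 + 4 * Ct12 r₁ r₂ ε * Ct21 r₁ r₂ ε)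
        = Real.sqrt (ufun r₁ r₂ ε^2 + 4*q) * (-(Ct21 r₁ r₂ ε)) := by
      rw [hbq, ← huc]
      have e : (ufun r₁ r₂ ε * Ct21 r₁ r₂ ε)^2 + 4*(q*Ct21 r₁ r₂ ε)*Ct21 r₁ r₂ ε
          = (ufun r₁ r₂ ε^2 + 4*q) * Ct21 r₁ r₂ ε^2 := by ring
      rw [e, Real.sqrt_mul (by positivity), Real.sqrt_sq_eq_abs, abs_of_neg hc_neg]
    constructor
    · rw [lam1, hsq, ufun]
      field_simp
      ring
    · rw [lam2, hsq, ufun]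
      field_simp
      ring
  have h1 : Tendsto (fun ε => ufun r₁ r₂ ε^2 + 4*q) (𝓝[>] 0) (𝓝 ((1-q)^2+4*q)) :=
    (hu.pow 2).add_const (4*q)
  have hs := h1.sqrt
  constructor
  · have hcont : Tendsto (fun ε => (ufun r₁ r₂ ε + Real.sqrt (ufun r₁ r₂ ε^2 + 4*q))/2)
        (𝓝[>] 0) (𝓝 ((1 - q + Real.sqrt ((1-q)^2 + 4*q))/2)) := (hu.add hs).div_const 2
    have hval : ((1 - q + Real.sqrt ((1-q)^2 + 4*q))/2) = 1 := by
      rw [show (1-q)^2 + 4*q = (1+q)^2 by ring, Real.sqrt_sq (by linarith)]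
      ring
    rw [hval] at hcont
    refine Tendsto.congr' ?_ hcont
    filter_upwards [hev] with ε h
    exact h.1.symm
  · have hcont : Tendsto (fun ε => (ufun r₁ r₂ ε - Real.sqrt (ufun r₁ r₂ ε^2 + 4*q))/2)
        (𝓝[>] 0) (𝓝 ((1 - q - Real.sqrt ((1-q)^2 + 4*q))/2)) := (hu.sub hs).div_const 2
    have hval : ((1 - q - Real.sqrt ((1-q)^2 + 4*q))/2) = -(r₂^3/r₁^3) := by
      rw [show (1-q)^2 + 4*q = (1+q)^2 by ring, Real.sqrt_sq (by linarith), hq]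
      ring
    rw [hval] at hcont
    refine Tendsto.congr' ?_ hcont
    filter_upwards [hev] with ε h
    exact h.2.symm
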